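/- (Entrywise monotonicity of the matrix exponential for Metzler matrices.) Let A and B be n×n real matrices such that A has nonnegative off-diagonal entries (A is Metzler) and A_{ij} ≤ B_{ij} for all i, j. Then exp(A) and exp(B) have nonnegative entries and exp(A)_{ij} ≤ exp(B)_{ij} for all i, j; in particular the maximum norm satisfies max_{i,j} |exp(A)_{ij}| ≤ max_{i,j} |exp(B)_{ij}|. -/

import Mathlib

open NormedSpace

private lemma pow_entry_nonneg_mono {n : ℕ} (M N : Matrix (Fin n) (Fin n) ℝ)
    (hM : ∀ i j, 0 ≤ M i j) (hMN : ∀ i j, M i j ≤ N i j) (k : ℕ) (i j : Fin n) :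
    0 ≤ (M ^ k) i j ∧ (M ^ k) i j ≤ (N ^ k) i j := by
  induction k generalizing i j with
  | zero =>
    simp only [pow_zero]
    refine ⟨?_, le_refl _⟩
    rw [Matrix.one_apply]
    split_ifs <;> norm_num
  | succ k ih =>
    rw [pow_succ, pow_succ, Matrix.mul_apply, Matrix.mul_apply]
    constructor
    · exact Finset.sum_nonneg fun l _ => mul_nonneg (ih i l).1 (hM l j)
    · refine Finset.sum_le_sum fun l _ => mul_le_mul (ih i l).2 (hMN l j) (hM l j) ?_
      exact le_trans (ih i l).1 (ih i l).2

private lemma exp_entry {n : ℕ} (M : Matrix (Fin n) (Fin n) ℝ) (i j : Fin n) :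
    HasSum (fun k : ℕ => ((k.factorial : ℝ))⁻¹ * (M ^ k) i j) (exp M i j) := by
  letI : SeminormedRing (Matrix (Fin n) (Fin n) ℝ) := Matrix.linftyOpSemiNormedRing
  letI : NormedRing (Matrix (Fin n) (Fin n) ℝ) := Matrix.linftyOpNormedRing
  letI : NormedAlgebra ℝ (Matrix (Fin n) (Fin n) ℝ) := Matrix.linftyOpNormedAlgebra
  have h : HasSum (fun k : ℕ => ((k.factorial : ℝ))⁻¹ • M ^ k) (exp M) := by
    rw [exp_eq_tsum ℝ]
    exact (expSeries_summable' (𝕂 := ℝ) M).hasSum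
  have h1 := Pi.hasSum.mp h i
  have h2 := Pi.hasSum.mp h1 j
  simpa [Matrix.smul_apply, smul_eq_mul] using h2

private lemma exp_entry_nonneg_mono {n : ℕ} (M N : Matrix (Fin n) (Fin n) ℝ)
    (hM : ∀ i j, 0 ≤ M i j) (hMN : ∀ i j, M i j ≤ N i j) (i j : Fin n) :
    0 ≤ exp M i j ∧ exp M i j ≤ exp N i j := by
  have hMsum := exp_entry M i j
  have hNsum := exp_entry N i j
  constructor
  · refine hasSum_le (fun k => ?_) hasSum_zero hMsum
    exact mul_nonneg (by positivity) (pow_entry_nonneg_mono M N hM hMN k i j).1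
  · refine hasSum_le (fun k => ?_) hMsum hNsum
    exact mul_le_mul_of_nonneg_left (pow_entry_nonneg_mono M N hM hMN k i j).2
      (by positivity)

/-- Entrywise monotonicity of the matrix exponential for Metzler
matrices: if `A` is Metzler (nonnegative off-diagonal entries) and `A ≤ B`
entrywise, then `exp A` and `exp B` are entrywise nonnegative, `exp A ≤ exp B`
entrywise, and consequently the maximum norms compare. -/
theorem stmt_18
    (n : ℕ) [NeZero n]
    (A B : Matrix (Fin n) (Fin n) ℝ)
    (hMetzler : ∀ i j, i ≠ j → 0 ≤ A i j)
    (hAB : ∀ i j, A i j ≤ B i j) :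
    (∀ i j, 0 ≤ exp A i j) ∧
    (∀ i j, exp A i j ≤ exp B i j) ∧
    (⨆ i, ⨆ j, |exp A i j|) ≤ ⨆ i, ⨆ j, |exp B i j| := by
  classical
  set c : ℝ := ∑ i, |A i i| with hc
  have hci : ∀ i : Fin n, -A i i ≤ c := by
    intro i
    calc -A i i ≤ |A i i| := neg_le_abs _
    _ ≤ c := Finset.single_le_sum (f := fun i => |A i i|)
        (fun _ _ => abs_nonneg _) (Finset.mem_univ i)
  set M : Matrix (Fin n) (Fin n) ℝ := A + c • (1 : Matrix (Fin n) (Fin n) ℝ) with hMdef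
  set N : Matrix (Fin n) (Fin n) ℝ := B + c • (1 : Matrix (Fin n) (Fin n) ℝ) with hNdef
  have hM : ∀ i j, 0 ≤ M i j := by
    intro i j
    rcases eq_or_ne i j with h | h
    · subst h
      simp only [hMdef, Matrix.add_apply, Matrix.smul_apply, Matrix.one_apply_eq,
        smul_eq_mul, mul_one]
      linarith [hci i]
    · simp only [hMdef, Matrix.add_apply, Matrix.smul_apply, Matrix.one_apply_ne h,
        smul_eq_mul, mul_zero, add_zero]
      exact hMetzler i j h
  have hMN : ∀ i j, M i j ≤ N i j := by
    intro i j
    simp only [hMdef, hNdef, Matrix.add_apply]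
    exact add_le_add_left (hAB i j) _
  -- express `exp A` and `exp B` in terms of `exp M` and `exp N`
  have key : ∀ C : Matrix (Fin n) (Fin n) ℝ,
      exp C = Real.exp (-c) • exp (C + c • (1 : Matrix (Fin n) (Fin n) ℝ)) := by
    intro C
    letI : SeminormedRing (Matrix (Fin n) (Fin n) ℝ) := Matrix.linftyOpSemiNormedRing
    letI : NormedRing (Matrix (Fin n) (Fin n) ℝ) := Matrix.linftyOpNormedRing
    letI : NormedAlgebra ℝ (Matrix (Fin n) (Fin n) ℝ) := Matrix.linftyOpNormedAlgebra
    have hC : C = (C + c • (1 : Matrix (Fin n) (Fin n) ℝ)) + (-c) • 1 := by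
      rw [neg_smul]; abel
    have hcomm : Commute ((-c) • (1 : Matrix (Fin n) (Fin n) ℝ))
        (C + c • (1 : Matrix (Fin n) (Fin n) ℝ)) :=
      ((Commute.one_left _).smul_left (-c))
    have hone : exp ((-c) • (1 : Matrix (Fin n) (Fin n) ℝ)) =
        Real.exp (-c) • (1 : Matrix (Fin n) (Fin n) ℝ) := by
      have h1 : (-c) • (1 : Matrix (Fin n) (Fin n) ℝ) =
          algebraMap ℝ (Matrix (Fin n) (Fin n) ℝ) (-c) := (Algebra.algebraMap_eq_smul_one _).symm
      rw [h1]
      erw [← algebraMap_exp_comm]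
      rw [Algebra.algebraMap_eq_smul_one, ← Real.exp_eq_exp_ℝ]
    calc exp C = exp ((C + c • (1 : Matrix (Fin n) (Fin n) ℝ)) + (-c) • 1) := by rw [← hC]
    _ = exp (C + c • (1 : Matrix (Fin n) (Fin n) ℝ)) *
          exp ((-c) • (1 : Matrix (Fin n) (Fin n) ℝ)) :=
        Matrix.exp_add_of_commute _ _ hcomm.symm
    _ = Real.exp (-c) • exp (C + c • (1 : Matrix (Fin n) (Fin n) ℝ)) := by
        rw [hone, mul_smul_comm, mul_one]
  have hA' : ∀ i j, exp A i j = Real.exp (-c) * exp M i j := by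
    intro i j; rw [key A]; simp [hMdef]
  have hB' : ∀ i j, exp B i j = Real.exp (-c) * exp N i j := by
    intro i j; rw [key B]; simp [hNdef]
  have h1 : ∀ i j, 0 ≤ exp A i j := by
    intro i j
    rw [hA' i j]
    exact mul_nonneg (Real.exp_nonneg _) (exp_entry_nonneg_mono M N hM hMN i j).1
  have h2 : ∀ i j, exp A i j ≤ exp B i j := by
    intro i j
    rw [hA' i j, hB' i j]
    exact mul_le_mul_of_nonneg_left (exp_entry_nonneg_mono M N hM hMN i j).2
      (Real.exp_nonneg _)
  refine ⟨h1, h2, ?_⟩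
  have habs : ∀ i j, |exp A i j| ≤ |exp B i j| := by
    intro i j
    rw [abs_of_nonneg (h1 i j), abs_of_nonneg (le_trans (h1 i j) (h2 i j))]
    exact h2 i j
  refine ciSup_mono (Set.Finite.bddAbove (Set.finite_range _)) fun i => ?_
  exact ciSup_mono (Set.Finite.bddAbove (Set.finite_range _)) fun j => habs i j
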